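/- Let M, M_s be positive integers with (M, M_s) ≠ (1, 1), let θ ∈ ℝ with cos(θ) ≠ 0, let s₀ ∈ ℝ, σ > 0, c > 0, and α_s ∈ ℂ with α_s ≠ 0. Let a(θ) = a_{M_s}(θ), and let q(θ) ∈ ℂ^M have m-th entry exp(iπ (s₀ − sin(θ))(2m−1−M)/2). Let ȧ(θ) and q̇(θ) denote the derivatives of a and q with respect to θ, and let X ∈ ℂ^{M×L} satisfy X X^H = cL · I_M. Define u(θ) = a(θ) q(θ)^T X with derivative u̇(θ). Then σ² / (2|α_s|² (tr(u̇(θ) u̇(θ)^H) − |tr(u(θ) u̇(θ)^H)|²/tr(u(θ) u(θ)^H))) = 6σ² / (cL |α_s|² π² cos²(θ) · M · M_s · (M² + M_s² − 2)). -/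

import Mathlib

open Matrix

/-- ULA array response vector: `[a_M(θ)]_m = exp(iπ sin(θ)(2m−1−M)/2)` for `m = 1, …, M`. -/
noncomputable def ula (M : ℕ) (θ : ℝ) : Fin M → ℂ :=
  fun m => Complex.exp (Complex.I *
    ((Real.pi * Real.sin θ * ((2 * (m : ℝ) + 1 - (M : ℝ)) / 2) : ℝ) : ℂ))

private lemma sum_fin_id (n : ℕ) : ∑ m : Fin n, (m : ℝ) = n * (n - 1) / 2 := by
  induction n with
  | zero => simp
  | succ n ih =>
    rw [Fin.sum_univ_castSucc]
    simp only [Fin.coe_castSucc, Fin.val_last, ih]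
    push_cast
    ring

private lemma sum_fin_sq (n : ℕ) : ∑ m : Fin n, (m : ℝ) ^ 2 = n * (n - 1) * (2 * n - 1) / 6 := by
  induction n with
  | zero => simp
  | succ n ih =>
    rw [Fin.sum_univ_castSucc]
    simp only [Fin.coe_castSucc, Fin.val_last, ih]
    push_cast
    ring

private lemma sum_d (n : ℕ) : ∑ m : Fin n, ((2 * (m : ℝ) + 1 - n) / 2) = 0 := by
  have h : ∀ m : Fin n, ((2 * (m : ℝ) + 1 - n) / 2) = (m : ℝ) + (1 - n) / 2 := fun m => by ring
  simp only [h, Finset.sum_add_distrib, Finset.sum_const, Finset.card_univ, Fintype.card_fin,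
    nsmul_eq_mul, sum_fin_id]
  ring

private lemma sum_dsq (n : ℕ) :
    ∑ m : Fin n, ((2 * (m : ℝ) + 1 - n) / 2) ^ 2 = n * ((n : ℝ) ^ 2 - 1) / 12 := by
  have h : ∀ m : Fin n, ((2 * (m : ℝ) + 1 - n) / 2) ^ 2
      = (m : ℝ) ^ 2 + (1 - n) * m + (1 - n) ^ 2 / 4 := fun m => by ring
  simp only [h, Finset.sum_add_distrib, Finset.sum_const, Finset.card_univ, Fintype.card_fin,
    nsmul_eq_mul, sum_fin_sq, ← Finset.mul_sum, sum_fin_id]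
  ring

private lemma exp_unit (r : ℝ) :
    Complex.exp (Complex.I * r) * star (Complex.exp (Complex.I * r)) = 1 := by
  have h : star (Complex.exp (Complex.I * r)) = Complex.exp (-(Complex.I * r)) := by
    rw [Complex.star_def, ← Complex.exp_conj]
    congr 1
    simp [Complex.conj_I]
  rw [h, ← Complex.exp_add, add_neg_cancel, Complex.exp_zero]

private lemma ula_hasDerivAt (n : ℕ) (m : Fin n) (θ : ℝ) :
    HasDerivAt (fun t => ula n t m)
      (ula n θ m *
        (Complex.I * ((Real.pi * Real.cos θ * ((2 * (m : ℝ) + 1 - n) / 2) : ℝ) : ℂ))) θ := by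
  have h1 : HasDerivAt (fun t : ℝ => Real.pi * Real.sin t * ((2 * (m : ℝ) + 1 - n) / 2))
      (Real.pi * Real.cos θ * ((2 * (m : ℝ) + 1 - n) / 2)) θ :=
    ((Real.hasDerivAt_sin θ).const_mul Real.pi).mul_const _
  have h2 := (h1.ofReal_comp.const_mul Complex.I).cexp
  simpa [ula, mul_comm, mul_left_comm, mul_assoc] using h2

private lemma q_hasDerivAt (n : ℕ) (s₀ : ℝ) (m : Fin n) (θ : ℝ) :
    HasDerivAt (fun t => Complex.exp (Complex.I *
        ((Real.pi * (s₀ - Real.sin t) * ((2 * (m : ℝ) + 1 - n) / 2) : ℝ) : ℂ)))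
      (Complex.exp (Complex.I *
          ((Real.pi * (s₀ - Real.sin θ) * ((2 * (m : ℝ) + 1 - n) / 2) : ℝ) : ℂ)) *
        (Complex.I * ((-(Real.pi * Real.cos θ) * ((2 * (m : ℝ) + 1 - n) / 2) : ℝ) : ℂ))) θ := by
  have h1 : HasDerivAt (fun t : ℝ => Real.pi * (s₀ - Real.sin t) * ((2 * (m : ℝ) + 1 - n) / 2))
      (-(Real.pi * Real.cos θ) * ((2 * (m : ℝ) + 1 - n) / 2)) θ := by
    have := (((Real.hasDerivAt_sin θ).const_sub s₀).const_mul Real.pi).mul_const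
      ((2 * (m : ℝ) + 1 - n) / 2)
    exact this.congr_deriv (by ring)
  have h2 := (h1.ofReal_comp.const_mul Complex.I).cexp
  simpa [mul_comm, mul_left_comm, mul_assoc] using h2

private lemma trace_key {Ms M L : ℕ} (X : Matrix (Fin M) (Fin L) ℂ) (k : ℂ)
    (hX : X * X.conjTranspose = k • (1 : Matrix (Fin M) (Fin M) ℂ))
    (p r : Fin Ms → ℂ) (q s : Fin M → ℂ) :
    Matrix.trace ((vecMulVec p q * X) * (vecMulVec r s * X).conjTranspose)
      = k * ((∑ m, q m * star (s m)) * (∑ i, p i * star (r i))) := by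
  rw [conjTranspose_mul]
  have h1 : (vecMulVec r s).conjTranspose = vecMulVec (star s) (star r) := by
    ext i j
    simp [vecMulVec_apply, conjTranspose_apply, mul_comm]
  rw [h1, Matrix.mul_assoc, ← Matrix.mul_assoc X, hX, Matrix.smul_mul, Matrix.one_mul,
    Matrix.mul_smul, trace_smul, smul_eq_mul]
  congr 1
  rw [Finset.sum_mul_sum]
  simp only [Matrix.trace, Matrix.diag, Matrix.mul_apply, vecMulVec_apply, Pi.star_apply]
  rw [Finset.sum_comm]
  exact Finset.sum_congr rfl fun m _ => Finset.sum_congr rfl fun i _ => by ring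

/-- Closed-form CRB for the STAS beam-scanning model: with `a(θ) = a_{M_s}(θ)`,
`[q(θ)]_m = exp(iπ(s₀ − sin θ)(2m−1−M)/2)`, `X X^H = cL · I_M`, and
`u(θ) = a(θ) q(θ)^T X` with derivative `u̇(θ)`,
`σ²/(2|α_s|²(tr(u̇u̇^H) − |tr(uu̇^H)|²/tr(uu^H))) = 6σ²/(cL|α_s|²π²cos²θ·M·M_s·(M²+M_s²−2))`. -/
theorem stmt_18 (M Ms L : ℕ) (hM : 1 ≤ M) (hMs : 1 ≤ Ms) (hnot : ¬(M = 1 ∧ Ms = 1))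
    (θ : ℝ) (hcos : Real.cos θ ≠ 0) (s₀ : ℝ) (σ : ℝ) (hσ : 0 < σ)
    (c : ℝ) (hc : 0 < c) (αs : ℂ) (hαs : αs ≠ 0)
    (qfun : ℝ → Fin M → ℂ)
    (hqfun : ∀ t : ℝ, ∀ m : Fin M, qfun t m = Complex.exp (Complex.I *
      ((Real.pi * (s₀ - Real.sin t) * ((2 * (m : ℝ) + 1 - (M : ℝ)) / 2) : ℝ) : ℂ)))
    (adot : Fin Ms → ℂ) (hadot : ∀ m : Fin Ms, HasDerivAt (fun t => ula Ms t m) (adot m) θ)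
    (qdot : Fin M → ℂ) (hqdot : ∀ m : Fin M, HasDerivAt (fun t => qfun t m) (qdot m) θ)
    (X : Matrix (Fin M) (Fin L) ℂ)
    (hX : X * X.conjTranspose = ((c * (L : ℝ) : ℝ) : ℂ) • (1 : Matrix (Fin M) (Fin M) ℂ))
    (u udot : Matrix (Fin Ms) (Fin L) ℂ)
    (hu : u = Matrix.vecMulVec (ula Ms θ) (qfun θ) * X)
    (hudot : ∀ i j, HasDerivAt
      (fun t => (Matrix.vecMulVec (ula Ms t) (qfun t) * X) i j) (udot i j) θ) :
    ((σ ^ 2 : ℝ) : ℂ) / (2 * ((‖αs‖ ^ 2 : ℝ) : ℂ) *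
        (Matrix.trace (udot * udot.conjTranspose)
          - ((‖Matrix.trace (u * udot.conjTranspose)‖ ^ 2 : ℝ) : ℂ)
              / Matrix.trace (u * u.conjTranspose)))
      = ((6 * σ ^ 2 : ℝ) : ℂ) / ((c * (L : ℝ) * ‖αs‖ ^ 2 * Real.pi ^ 2 * Real.cos θ ^ 2 *
          (M : ℝ) * (Ms : ℝ) * ((M : ℝ) ^ 2 + (Ms : ℝ) ^ 2 - 2) : ℝ) : ℂ) := by
  set β : ℝ := Real.pi * Real.cos θ with hβ
  set k : ℂ := ((c * (L : ℝ) : ℝ) : ℂ) with hk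
  -- unit modulus facts
  have ha1 : ∀ m : Fin Ms, ula Ms θ m * star (ula Ms θ m) = 1 := fun m => exp_unit _
  have hq1 : ∀ m : Fin M, qfun θ m * star (qfun θ m) = 1 := fun m => by
    rw [hqfun θ m]; exact exp_unit _
  -- closed form for adot
  have hadot' : ∀ m : Fin Ms, adot m
      = ula Ms θ m * (Complex.I * ((β * ((2 * (m : ℝ) + 1 - Ms) / 2) : ℝ) : ℂ)) := by
    intro m
    have := (hadot m).unique (ula_hasDerivAt Ms m θ)
    rw [this, hβ]
  -- closed form for qdot
  have hqdot' : ∀ m : Fin M, qdot m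
      = qfun θ m * (Complex.I * ((-β * ((2 * (m : ℝ) + 1 - M) / 2) : ℝ) : ℂ)) := by
    intro m
    have hq_eq : (fun t => qfun t m) = fun t => Complex.exp (Complex.I *
        ((Real.pi * (s₀ - Real.sin t) * ((2 * (m : ℝ) + 1 - M) / 2) : ℝ) : ℂ)) :=
      funext fun t => hqfun t m
    have h := q_hasDerivAt M s₀ m θ
    rw [← hq_eq, ← hqfun θ m] at h
    have := (hqdot m).unique h
    rw [this, hβ]
  -- closed form for udot
  have hud : udot = vecMulVec adot (qfun θ) * X + vecMulVec (ula Ms θ) qdot * X := by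
    ext i j
    have hfun : (fun t => (vecMulVec (ula Ms t) (qfun t) * X) i j)
        = fun t => ∑ m, ula Ms t i * qfun t m * X m j := by
      funext t
      simp [Matrix.mul_apply, vecMulVec_apply]
    have H : HasDerivAt (fun t => (vecMulVec (ula Ms t) (qfun t) * X) i j)
        (∑ m, (adot i * qfun θ m + ula Ms θ i * qdot m) * X m j) θ := by
      rw [hfun]
      exact HasDerivAt.fun_sum fun m _ => ((hadot i).mul (hqdot m)).mul_const _
    rw [(hudot i j).unique H]
    simp [Matrix.add_apply, Matrix.mul_apply, vecMulVec_apply, add_mul,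
      Finset.sum_add_distrib]
  -- dot product sums
  have ha1c : ∀ m : Fin Ms, ula Ms θ m * (starRingEnd ℂ) (ula Ms θ m) = 1 := by
    intro m
    rw [← Complex.star_def]
    exact ha1 m
  have hq1c : ∀ m : Fin M, qfun θ m * (starRingEnd ℂ) (qfun θ m) = 1 := by
    intro m
    rw [← Complex.star_def]
    exact hq1 m
  have Sqq : (∑ m : Fin M, qfun θ m * star (qfun θ m)) = (M : ℂ) := by
    rw [Finset.sum_congr rfl fun m _ => hq1 m]
    simp
  have Saa : (∑ m : Fin Ms, ula Ms θ m * star (ula Ms θ m)) = (Ms : ℂ) := by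
    rw [Finset.sum_congr rfl fun m _ => ha1 m]
    simp
  have Sada : (∑ m : Fin Ms, adot m * star (ula Ms θ m)) = 0 := by
    have e : ∀ m : Fin Ms, adot m * star (ula Ms θ m)
        = ((β * ((2 * (m : ℝ) + 1 - Ms) / 2) : ℝ) : ℂ) * Complex.I := by
      intro m
      rw [hadot' m]
      calc ula Ms θ m * (Complex.I * ((β * ((2 * (m : ℝ) + 1 - Ms) / 2) : ℝ) : ℂ))
            * star (ula Ms θ m)
          = (ula Ms θ m * star (ula Ms θ m))
            * (((β * ((2 * (m : ℝ) + 1 - Ms) / 2) : ℝ) : ℂ) * Complex.I) := by ring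
        _ = _ := by rw [ha1 m, one_mul]
    rw [Finset.sum_congr rfl fun m _ => e m, ← Finset.sum_mul, ← Complex.ofReal_sum,
      ← Finset.mul_sum, sum_d Ms, mul_zero]
    simp
  have Saad : (∑ m : Fin Ms, ula Ms θ m * star (adot m)) = 0 := by
    have e : ∀ m : Fin Ms, ula Ms θ m * star (adot m)
        = ((β * ((2 * (m : ℝ) + 1 - Ms) / 2) : ℝ) : ℂ) * (-Complex.I) := by
      intro m
      rw [hadot' m]
      simp only [Complex.star_def, _root_.map_mul, Complex.conj_I, Complex.conj_ofReal]
      linear_combination (-Complex.I * ((β * ((2 * (m : ℝ) + 1 - Ms) / 2) : ℝ) : ℂ)) * ha1c m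
    rw [Finset.sum_congr rfl fun m _ => e m, ← Finset.sum_mul, ← Complex.ofReal_sum,
      ← Finset.mul_sum, sum_d Ms, mul_zero]
    simp
  have Sqdq : (∑ m : Fin M, qdot m * star (qfun θ m)) = 0 := by
    have e : ∀ m : Fin M, qdot m * star (qfun θ m)
        = ((-β * ((2 * (m : ℝ) + 1 - M) / 2) : ℝ) : ℂ) * Complex.I := by
      intro m
      rw [hqdot' m]
      calc qfun θ m * (Complex.I * ((-β * ((2 * (m : ℝ) + 1 - M) / 2) : ℝ) : ℂ))
            * star (qfun θ m)
          = (qfun θ m * star (qfun θ m))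
            * (((-β * ((2 * (m : ℝ) + 1 - M) / 2) : ℝ) : ℂ) * Complex.I) := by ring
        _ = _ := by rw [hq1 m, one_mul]
    rw [Finset.sum_congr rfl fun m _ => e m, ← Finset.sum_mul, ← Complex.ofReal_sum]
    have : (∑ m : Fin M, -β * ((2 * (m : ℝ) + 1 - M) / 2))
        = -β * ∑ m : Fin M, ((2 * (m : ℝ) + 1 - M) / 2) := by
      rw [Finset.mul_sum]
    rw [this, sum_d M, mul_zero]
    simp
  have Sqqd : (∑ m : Fin M, qfun θ m * star (qdot m)) = 0 := by
    have e : ∀ m : Fin M, qfun θ m * star (qdot m)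
        = ((-β * ((2 * (m : ℝ) + 1 - M) / 2) : ℝ) : ℂ) * (-Complex.I) := by
      intro m
      rw [hqdot' m]
      simp only [Complex.star_def, _root_.map_mul, Complex.conj_I, Complex.conj_ofReal]
      linear_combination (-Complex.I * ((-β * ((2 * (m : ℝ) + 1 - M) / 2) : ℝ) : ℂ)) * hq1c m
    rw [Finset.sum_congr rfl fun m _ => e m, ← Finset.sum_mul, ← Complex.ofReal_sum]
    have : (∑ m : Fin M, -β * ((2 * (m : ℝ) + 1 - M) / 2))
        = -β * ∑ m : Fin M, ((2 * (m : ℝ) + 1 - M) / 2) := by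
      rw [Finset.mul_sum]
    rw [this, sum_d M, mul_zero]
    simp
  have Sadad : (∑ m : Fin Ms, adot m * star (adot m))
      = ((β ^ 2 * ((Ms : ℝ) * ((Ms : ℝ) ^ 2 - 1) / 12) : ℝ) : ℂ) := by
    have e : ∀ m : Fin Ms, adot m * star (adot m)
        = (((β * ((2 * (m : ℝ) + 1 - Ms) / 2)) ^ 2 : ℝ) : ℂ) := by
      intro m
      rw [hadot' m]
      simp only [Complex.star_def, _root_.map_mul, Complex.conj_I, Complex.conj_ofReal]
      rw [show (((β * ((2 * (m : ℝ) + 1 - Ms) / 2)) ^ 2 : ℝ) : ℂ)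
          = ((β * ((2 * (m : ℝ) + 1 - Ms) / 2) : ℝ) : ℂ) ^ 2 from by push_cast; ring]
      linear_combination
        (-(Complex.I * Complex.I)) * ((β * ((2 * (m : ℝ) + 1 - Ms) / 2) : ℝ) : ℂ) ^ 2 * ha1c m
          + (-(((β * ((2 * (m : ℝ) + 1 - Ms) / 2) : ℝ) : ℂ) ^ 2)) * Complex.I_mul_I
    rw [Finset.sum_congr rfl fun m _ => e m, ← Complex.ofReal_sum]
    congr 1
    have : ∀ m : Fin Ms, (β * ((2 * (m : ℝ) + 1 - Ms) / 2)) ^ 2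
        = β ^ 2 * ((2 * (m : ℝ) + 1 - Ms) / 2) ^ 2 := fun m => by ring
    rw [Finset.sum_congr rfl fun m _ => this m, ← Finset.mul_sum, sum_dsq Ms]
  have Sqdqd : (∑ m : Fin M, qdot m * star (qdot m))
      = ((β ^ 2 * ((M : ℝ) * ((M : ℝ) ^ 2 - 1) / 12) : ℝ) : ℂ) := by
    have e : ∀ m : Fin M, qdot m * star (qdot m)
        = (((β * ((2 * (m : ℝ) + 1 - M) / 2)) ^ 2 : ℝ) : ℂ) := by
      intro m
      rw [hqdot' m]
      simp only [Complex.star_def, _root_.map_mul, Complex.conj_I, Complex.conj_ofReal]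
      rw [show (((β * ((2 * (m : ℝ) + 1 - M) / 2)) ^ 2 : ℝ) : ℂ)
          = ((-β * ((2 * (m : ℝ) + 1 - M) / 2) : ℝ) : ℂ) ^ 2 from by push_cast; ring]
      linear_combination
        (-(Complex.I * Complex.I)) * ((-β * ((2 * (m : ℝ) + 1 - M) / 2) : ℝ) : ℂ) ^ 2 * hq1c m
          + (-(((-β * ((2 * (m : ℝ) + 1 - M) / 2) : ℝ) : ℂ) ^ 2)) * Complex.I_mul_I
    rw [Finset.sum_congr rfl fun m _ => e m, ← Complex.ofReal_sum]
    congr 1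
    have : ∀ m : Fin M, (β * ((2 * (m : ℝ) + 1 - M) / 2)) ^ 2
        = β ^ 2 * ((2 * (m : ℝ) + 1 - M) / 2) ^ 2 := fun m => by ring
    rw [Finset.sum_congr rfl fun m _ => this m, ← Finset.mul_sum, sum_dsq M]
  -- traces
  have hT1 : Matrix.trace (u * u.conjTranspose) = k * ((M : ℂ) * (Ms : ℂ)) := by
    rw [hu, trace_key X k hX, Sqq, Saa]
  have hT2 : Matrix.trace (u * udot.conjTranspose) = 0 := by
    rw [hu, hud, conjTranspose_add, Matrix.mul_add, trace_add]
    simp only [trace_key X k hX]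
    rw [Saad, Sqqd]
    ring
  have hT3 : Matrix.trace (udot * udot.conjTranspose)
      = k * ((M : ℂ) * ((β ^ 2 * ((Ms : ℝ) * ((Ms : ℝ) ^ 2 - 1) / 12) : ℝ) : ℂ)
          + ((β ^ 2 * ((M : ℝ) * ((M : ℝ) ^ 2 - 1) / 12) : ℝ) : ℂ) * (Ms : ℂ)) := by
    rw [hud, conjTranspose_add, Matrix.mul_add, Matrix.add_mul, Matrix.add_mul]
    simp only [trace_add, trace_key X k hX]
    rw [Sqq, Saa, Sada, Saad, Sqdq, Sqqd, Sadad, Sqdqd]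
    ring
  rw [hT2, hT3]
  simp only [norm_zero, ne_eq, OfNat.ofNat_ne_zero, not_false_eq_true, zero_pow,
    Complex.ofReal_zero, zero_div, sub_zero]
  rw [hk, hβ]
  have hcast : (2 : ℂ) * ((‖αs‖ ^ 2 : ℝ) : ℂ) * (((c * (L : ℝ) : ℝ) : ℂ) *
      ((M : ℂ) * (((Real.pi * Real.cos θ) ^ 2 * ((Ms : ℝ) * ((Ms : ℝ) ^ 2 - 1) / 12) : ℝ) : ℂ)
        + (((Real.pi * Real.cos θ) ^ 2 * ((M : ℝ) * ((M : ℝ) ^ 2 - 1) / 12) : ℝ) : ℂ)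
          * (Ms : ℂ)))
      = ((2 * ‖αs‖ ^ 2 * (c * (L : ℝ) *
          ((M : ℝ) * ((Real.pi * Real.cos θ) ^ 2 * ((Ms : ℝ) * ((Ms : ℝ) ^ 2 - 1) / 12))
            + (Real.pi * Real.cos θ) ^ 2 * ((M : ℝ) * ((M : ℝ) ^ 2 - 1) / 12) * (Ms : ℝ)))
          : ℝ) : ℂ) := by
    push_cast
    ring
  rw [hcast, ← Complex.ofReal_div, ← Complex.ofReal_div]
  congr 1
  -- now a real identity
  rcases Nat.eq_zero_or_pos L with hL | hL
  · subst hL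
    norm_num
  · have hπ : Real.pi ≠ 0 := Real.pi_ne_zero
    have hα : ‖αs‖ ≠ 0 := norm_ne_zero_iff.mpr hαs
    have hMpos : (0 : ℝ) < (M : ℝ) := by exact_mod_cast hM
    have hMspos : (0 : ℝ) < (Ms : ℝ) := by exact_mod_cast hMs
    have hLpos : (0 : ℝ) < (L : ℝ) := by exact_mod_cast hL
    have hcase : 2 ≤ M ∨ 2 ≤ Ms := by omega
    have hK : (0 : ℝ) < (M : ℝ) ^ 2 + (Ms : ℝ) ^ 2 - 2 := by
      rcases hcase with h | h
      · have : (2 : ℝ) ≤ (M : ℝ) := by exact_mod_cast h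
        nlinarith
      · have : (2 : ℝ) ≤ (Ms : ℝ) := by exact_mod_cast h
        nlinarith
    have hcos2 : (0 : ℝ) < Real.cos θ ^ 2 :=
      lt_of_le_of_ne (sq_nonneg _) (Ne.symm (pow_ne_zero 2 hcos))
    have hπ2 : (0 : ℝ) < Real.pi ^ 2 := by positivity
    have hα2 : (0 : ℝ) < ‖αs‖ ^ 2 := by positivity
    have hD : (0 : ℝ) < c * (L : ℝ) * ‖αs‖ ^ 2 * Real.pi ^ 2 * Real.cos θ ^ 2 *
        (M : ℝ) * (Ms : ℝ) * ((M : ℝ) ^ 2 + (Ms : ℝ) ^ 2 - 2) := by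
      have := hc
      positivity
    have hE : 2 * ‖αs‖ ^ 2 * (c * (L : ℝ) *
        ((M : ℝ) * ((Real.pi * Real.cos θ) ^ 2 * ((Ms : ℝ) * ((Ms : ℝ) ^ 2 - 1) / 12))
          + (Real.pi * Real.cos θ) ^ 2 * ((M : ℝ) * ((M : ℝ) ^ 2 - 1) / 12) * (Ms : ℝ)))
        = (c * (L : ℝ) * ‖αs‖ ^ 2 * Real.pi ^ 2 * Real.cos θ ^ 2 *
          (M : ℝ) * (Ms : ℝ) * ((M : ℝ) ^ 2 + (Ms : ℝ) ^ 2 - 2)) / 6 := by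
      ring
    rw [hE, div_div_eq_mul_div, div_eq_div_iff (by positivity) hD.ne']
    ring
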